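/- The upper triangular compatible matrix Ω with entries ω_{ii} = 1, ω_{ij} = 0 for j < i, and ω_{ij} = Σ_{v=2}^{j-i+1} (-1)^{v-1} Σ_{increasing chains i = k_1 < k_2 < … < k_v = j} Π_{s=1}^{v-1} h_{k_s, k_{s+1}} for j > i (where h_{p,q} = a_p^T a_q / ||a_q||_2^2), satisfies A_S = Ω A. -/

import Mathlib

open Matrix Filter

noncomputable def projMat {n : ℕ} (a : Fin n → ℝ) : Matrix (Fin n) (Fin n) ℝ :=
  1 - (a ⬝ᵥ a)⁻¹ • Matrix.vecMulVec a a

noncomputable def vnorm {n : ℕ} (x : Fin n → ℝ) : ℝ := Real.sqrt (x ⬝ᵥ x)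

/-- `x ∈ N(A)^⊥`: `x` is orthogonal to every vector of the null space of `A`. -/
def inNullPerp {m n : ℕ} (A : Matrix (Fin m) (Fin n) ℝ) (x : Fin n → ℝ) : Prop :=
  ∀ z : Fin n → ℝ, A.mulVec z = 0 → x ⬝ᵥ z = 0

/-- `P_k` (0-indexed): the projection onto the hyperplane orthogonal to row `k` of `A`. -/
noncomputable def Pnat {m n : ℕ} (A : Matrix (Fin m) (Fin n) ℝ) (k : ℕ) :
    Matrix (Fin n) (Fin n) ℝ :=
  if h : k < m then projMat (A ⟨k, h⟩) else 1

/-- descending product `f (lo+len-1) * ⋯ * f (lo+1) * f lo` -/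
noncomputable def prodDesc {α : Type*} [Monoid α] (f : ℕ → α) (lo : ℕ) : ℕ → α
  | 0 => 1
  | k + 1 => f (lo + k) * prodDesc f lo k

/-- ascending product `f lo * f (lo+1) * ⋯ * f (lo+len-1)` -/
noncomputable def prodAsc {α : Type*} [Monoid α] (f : ℕ → α) (lo : ℕ) : ℕ → α
  | 0 => 1
  | k + 1 => prodAsc f lo k * f (lo + k)

/-- `Q_j = P_m ⋯ P_{j+1}` (paper indices); here `j : Fin m` is 0-indexed. -/
noncomputable def Qmat {m n : ℕ} (A : Matrix (Fin m) (Fin n) ℝ) (j : Fin m) :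
    Matrix (Fin n) (Fin n) ℝ :=
  prodDesc (Pnat A) ((j : ℕ) + 1) (m - 1 - (j : ℕ))

/-- `Q = P_m P_{m-1} ⋯ P_1`. -/
noncomputable def Qfull {m n : ℕ} (A : Matrix (Fin m) (Fin n) ℝ) : Matrix (Fin n) (Fin n) ℝ :=
  prodDesc (Pnat A) 0 m

/-- `A_S = (Q_1 a_1, …, Q_m a_m)ᵀ`. -/
noncomputable def ASmat {m n : ℕ} (A : Matrix (Fin m) (Fin n) ℝ) : Matrix (Fin m) (Fin n) ℝ :=
  fun i => (Qmat A i).mulVec (A i)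

/-- `M = diag (1/‖a_1‖², …, 1/‖a_m‖²)`. -/
noncomputable def Mdiag {m n : ℕ} (A : Matrix (Fin m) (Fin n) ℝ) : Matrix (Fin m) (Fin m) ℝ :=
  Matrix.diagonal fun i => (A i ⬝ᵥ A i)⁻¹

/-- `Q̄_1 = Q̄_m = 0`, `Q̄_2 = I`, `Q̄_i = P_2 ⋯ P_{i-1}` (paper indices); `i : Fin m` 0-indexed. -/
noncomputable def barQmat {m n : ℕ} (A : Matrix (Fin m) (Fin n) ℝ) (i : Fin m) :
    Matrix (Fin n) (Fin n) ℝ :=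
  if (i : ℕ) = 0 ∨ (i : ℕ) = m - 1 then 0 else prodAsc (Pnat A) 1 ((i : ℕ) - 1)

/-- `Q̄ = P_2 P_3 ⋯ P_{m-1}`. -/
noncomputable def barQfull {m n : ℕ} (A : Matrix (Fin m) (Fin n) ℝ) : Matrix (Fin n) (Fin n) ℝ :=
  prodAsc (Pnat A) 1 (m - 2)

/-- `Ā_S = (Q̄_1 a_1, …, Q̄_m a_m)ᵀ`. -/
noncomputable def barASmat {m n : ℕ} (A : Matrix (Fin m) (Fin n) ℝ) : Matrix (Fin m) (Fin n) ℝ :=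
  fun i => (barQmat A i).mulVec (A i)

/-- `h_{p,q} = a_pᵀ a_q / ‖a_q‖²`. -/
noncomputable def hcoef {m n : ℕ} (A : Matrix (Fin m) (Fin n) ℝ) (p q : Fin m) : ℝ :=
  (A p ⬝ᵥ A q) / (A q ⬝ᵥ A q)

/-- The compatible matrix `Ω`: `ω_{ii} = 1`, `ω_{ij} = 0` for `j < i`, and for `j > i`
`ω_{ij} = Σ_{v=2}^{j-i+1} (-1)^{v-1} Σ_{chains i = k₁ < ⋯ < k_v = j} Π_s h_{k_s,k_{s+1}}`
(here the outer sum variable is shifted: `v = w + 2`, `w ∈ range (j - i)`). -/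
noncomputable def OmegaMat {m n : ℕ} (A : Matrix (Fin m) (Fin n) ℝ) :
    Matrix (Fin m) (Fin m) ℝ :=
  fun i j =>
    if i = j then 1
    else if j < i then 0
    else ∑ w ∈ Finset.range ((j : ℕ) - (i : ℕ)), (-1 : ℝ) ^ (w + 1) *
      ∑ c : Fin (w + 2) → Fin m,
        if (∀ s t : Fin (w + 2), s < t → c s < c t) ∧ c 0 = i ∧ c (Fin.last (w + 1)) = j
        then ∏ s : Fin (w + 1), hcoef A (c s.castSucc) (c s.succ) else 0


section Aux

variable {m n : ℕ}

noncomputable def chainSum (A : Matrix (Fin m) (Fin n) ℝ) (w : ℕ) (i j : Fin m) : ℝ :=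
  ∑ c : Fin (w + 2) → Fin m,
    if (∀ s t : Fin (w + 2), s < t → c s < c t) ∧ c 0 = i ∧ c (Fin.last (w + 1)) = j
    then ∏ s : Fin (w + 1), hcoef A (c s.castSucc) (c s.succ) else 0

lemma omega_eq (A : Matrix (Fin m) (Fin n) ℝ) {i j : Fin m} (hij : i < j) :
    OmegaMat A i j
      = ∑ w ∈ Finset.range ((j : ℕ) - (i : ℕ)), (-1 : ℝ) ^ (w + 1) * chainSum A w i j := by
  rw [OmegaMat]
  rw [if_neg hij.ne, if_neg (not_lt.mpr hij.le)]
  rfl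

lemma omega_diag (A : Matrix (Fin m) (Fin n) ℝ) (i : Fin m) : OmegaMat A i i = 1 := by
  rw [OmegaMat]; simp

lemma omega_lower (A : Matrix (Fin m) (Fin n) ℝ) {i j : Fin m} (h : j < i) :
    OmegaMat A i j = 0 := by
  rw [OmegaMat, if_neg h.ne', if_pos h]

lemma strictMono_gap {k : ℕ} {c : Fin (k + 1) → Fin m} (hc : StrictMono c) (t : Fin (k + 1)) :
    (c 0 : ℕ) + (t : ℕ) ≤ (c t : ℕ) := by
  induction t using Fin.induction with
  | zero => simp
  | succ t ih =>
    have h1 : c t.castSucc < c t.succ := hc (Fin.castSucc_lt_succ : t.castSucc < t.succ)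
    have h2 : ((c t.castSucc : Fin m) : ℕ) < (c t.succ : ℕ) := h1
    simp only [Fin.coe_castSucc] at ih
    simp only [Fin.val_succ]
    omega

lemma chainSum_eq_zero (A : Matrix (Fin m) (Fin n) ℝ) {w : ℕ} {i j : Fin m}
    (h : ¬ ((i : ℕ) + w + 1 ≤ (j : ℕ))) : chainSum A w i j = 0 := by
  apply Finset.sum_eq_zero
  intro c _
  rw [if_neg]
  rintro ⟨hm, h0, hl⟩
  have hm' : StrictMono c := fun s t hst => hm s t hst
  have := strictMono_gap hm' (Fin.last (w + 1))
  rw [h0, hl] at this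
  simp only [Fin.val_last] at this
  omega

lemma chainSum_zero (A : Matrix (Fin m) (Fin n) ℝ) {i j : Fin m} (hij : i < j) :
    chainSum A 0 i j = hcoef A i j := by
  rw [chainSum, Finset.sum_eq_single ![i, j]]
  · rw [if_pos]
    · simp
    · refine ⟨?_, rfl, rfl⟩
      intro s t hst
      fin_cases s <;> fin_cases t <;> simp_all
  · intro c _ hc
    rw [if_neg]
    rintro ⟨_, h0, h1⟩
    apply hc
    funext s
    fin_cases s
    · exact h0
    · exact h1
  · intro h; exact absurd (Finset.mem_univ _) h

lemma strictMono_snoc_iff {k : ℕ} (c : Fin (k + 1) → Fin m) (p : Fin m) :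
    StrictMono (Fin.snoc c p : Fin (k + 2) → Fin m) ↔ StrictMono c ∧ c (Fin.last k) < p := by
  constructor
  · intro h
    refine ⟨fun s t hst => ?_, ?_⟩
    · have := h (show (s.castSucc : Fin (k + 2)) < t.castSucc from
        Fin.castSucc_lt_castSucc_iff.mpr hst)
      simpa using this
    · have := h (Fin.castSucc_lt_last (Fin.last k))
      simpa using this
  · rintro ⟨hc, hl⟩
    rw [Fin.strictMono_iff_lt_succ]
    intro s
    refine Fin.lastCases ?_ ?_ s
    · simpa [Fin.succ_last] using hl
    · intro t
      have : c t.castSucc < c t.succ := hc (Fin.castSucc_lt_succ : t.castSucc < t.succ)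
      rw [Fin.succ_castSucc, Fin.snoc_castSucc, Fin.snoc_castSucc]; exact this

def snocE (k : ℕ) : ((Fin (k + 1) → Fin m) × Fin m) ≃ (Fin (k + 2) → Fin m) where
  toFun cp := Fin.snoc cp.1 cp.2
  invFun c := (Fin.init c, c (Fin.last (k + 1)))
  left_inv := by intro cp; simp
  right_inv := by intro c; simp

lemma chainSum_succ (A : Matrix (Fin m) (Fin n) ℝ) (w : ℕ) (i j : Fin m) :
    chainSum A (w + 1) i j
      = ∑ p : Fin m, if p < j then chainSum A w i p * hcoef A p j else 0 := by
  classical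
  set E : (Fin (w + 2) → Fin m) → ℝ := fun c =>
    if (∀ s t : Fin (w + 2), s < t → c s < c t) ∧ c 0 = i ∧ c (Fin.last (w + 1)) < j
    then (∏ t : Fin (w + 1), hcoef A (c t.castSucc) (c t.succ))
      * hcoef A (c (Fin.last (w + 1))) j else 0 with hE
  have hL : chainSum A (w + 1) i j = ∑ c : Fin (w + 2) → Fin m, E c := by
    rw [chainSum, ← Equiv.sum_comp (snocE (k := w + 1) (m := m)), Fintype.sum_prod_type]
    simp only [snocE, Equiv.coe_fn_mk]
    refine Finset.sum_congr rfl fun c _ => ?_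
    have hterm : ∀ p : Fin m,
        (if (∀ s t : Fin (w + 3), s < t →
              (Fin.snoc c p : Fin (w + 3) → Fin m) s < (Fin.snoc c p : Fin (w + 3) → Fin m) t)
            ∧ (Fin.snoc c p : Fin (w + 3) → Fin m) 0 = i
            ∧ (Fin.snoc c p : Fin (w + 3) → Fin m) (Fin.last (w + 2)) = j
         then ∏ s : Fin (w + 2), hcoef A ((Fin.snoc c p : Fin (w + 3) → Fin m) s.castSucc)
              ((Fin.snoc c p : Fin (w + 3) → Fin m) s.succ) else 0)
        = if p = j then E c else 0 := by
      intro p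
      have h0 : (Fin.snoc c p : Fin (w + 3) → Fin m) 0 = c 0 := by
        rw [← Fin.castSucc_zero, Fin.snoc_castSucc]
      have hlast : (Fin.snoc c p : Fin (w + 3) → Fin m) (Fin.last (w + 2)) = p :=
        Fin.snoc_last _ _
      have hSM : (∀ s t : Fin (w + 3), s < t →
            (Fin.snoc c p : Fin (w + 3) → Fin m) s < (Fin.snoc c p : Fin (w + 3) → Fin m) t)
          ↔ (∀ s t : Fin (w + 2), s < t → c s < c t) ∧ c (Fin.last (w + 1)) < p := by
        rw [show (∀ s t : Fin (w + 3), s < t →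
              (Fin.snoc c p : Fin (w + 3) → Fin m) s < (Fin.snoc c p : Fin (w + 3) → Fin m) t)
            ↔ StrictMono (Fin.snoc c p : Fin (w + 3) → Fin m) from
          ⟨fun h a b hab => h a b hab, fun h a b hab => h hab⟩]
        rw [strictMono_snoc_iff]
        constructor
        · rintro ⟨h1, h2⟩; exact ⟨fun a b hab => h1 hab, h2⟩
        · rintro ⟨h1, h2⟩; exact ⟨fun a b hab => h1 a b hab, h2⟩
      have hprod : (∏ s : Fin (w + 2), hcoef A ((Fin.snoc c p : Fin (w + 3) → Fin m) s.castSucc)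
              ((Fin.snoc c p : Fin (w + 3) → Fin m) s.succ))
          = (∏ t : Fin (w + 1), hcoef A (c t.castSucc) (c t.succ))
            * hcoef A (c (Fin.last (w + 1))) p := by
        rw [Fin.prod_univ_castSucc]
        congr 1
        · refine Finset.prod_congr rfl fun t _ => ?_
          rw [Fin.snoc_castSucc, Fin.succ_castSucc, Fin.snoc_castSucc]
        · rw [Fin.snoc_castSucc, Fin.succ_last, Fin.snoc_last]
      rw [h0, hlast, hprod]
      by_cases hpj : p = j
      · subst hpj
        rw [if_pos rfl]
        simp only [hE]
        by_cases hc : (∀ s t : Fin (w + 2), s < t → c s < c t) ∧ c 0 = i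
            ∧ c (Fin.last (w + 1)) < p
        · rw [if_pos, if_pos hc]
          exact ⟨hSM.mpr ⟨hc.1, hc.2.2⟩, hc.2.1, by trivial⟩
        · rw [if_neg, if_neg hc]
          rintro ⟨hsm, hc0, -⟩
          exact hc ⟨(hSM.mp hsm).1, hc0, (hSM.mp hsm).2⟩
      · rw [if_neg, if_neg hpj]
        rintro ⟨-, -, hlj⟩
        exact hpj hlj
    calc (∑ p : Fin m, _) = ∑ p : Fin m, if p = j then E c else 0 :=
          Finset.sum_congr rfl fun p _ => hterm p
      _ = E c := by
          rw [Finset.sum_ite_eq' Finset.univ j (fun _ => E c), if_pos (Finset.mem_univ j)]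
  have hR : (∑ p : Fin m, if p < j then chainSum A w i p * hcoef A p j else 0)
      = ∑ c : Fin (w + 2) → Fin m, E c := by
    have step1 : ∀ p : Fin m, (if p < j then chainSum A w i p * hcoef A p j else 0)
        = ∑ c : Fin (w + 2) → Fin m,
          if c (Fin.last (w + 1)) = p then E c else 0 := by
      intro p
      rw [chainSum]
      by_cases hpj : p < j
      · rw [if_pos hpj, Finset.sum_mul]
        refine Finset.sum_congr rfl fun c _ => ?_
        by_cases hcp : c (Fin.last (w + 1)) = p
        · rw [if_pos hcp]
          simp only [hE]
          by_cases hc : (∀ s t : Fin (w + 2), s < t → c s < c t) ∧ c 0 = i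
              ∧ c (Fin.last (w + 1)) = p
          · rw [if_pos hc, if_pos ⟨hc.1, hc.2.1, by rw [hcp]; exact hpj⟩, hcp]
          · rw [if_neg hc, zero_mul, if_neg]
            rintro ⟨h1, h2, -⟩
            exact hc ⟨h1, h2, hcp⟩
        · rw [if_neg, zero_mul, if_neg hcp]
          rintro ⟨-, -, hcl⟩
          exact hcp hcl
      · rw [if_neg hpj]
        symm
        apply Finset.sum_eq_zero
        intro c _
        by_cases hcp : c (Fin.last (w + 1)) = p
        · rw [if_pos hcp]
          simp only [hE]
          rw [if_neg]
          rintro ⟨-, -, hlt⟩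
          rw [hcp] at hlt
          exact hpj hlt
        · rw [if_neg hcp]
    calc (∑ p : Fin m, if p < j then chainSum A w i p * hcoef A p j else 0)
        = ∑ p : Fin m, ∑ c : Fin (w + 2) → Fin m,
            if c (Fin.last (w + 1)) = p then E c else 0 :=
          Finset.sum_congr rfl fun p _ => step1 p
      _ = ∑ c : Fin (w + 2) → Fin m, ∑ p : Fin m,
            if c (Fin.last (w + 1)) = p then E c else 0 := Finset.sum_comm
      _ = ∑ c : Fin (w + 2) → Fin m, E c := by
          refine Finset.sum_congr rfl fun c _ => ?_
          rw [Finset.sum_ite_eq Finset.univ (c (Fin.last (w + 1))) (fun _ => E c),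
            if_pos (Finset.mem_univ _)]
  rw [hL, hR]

lemma omega_rec (A : Matrix (Fin m) (Fin n) ℝ) {i j : Fin m} (hij : i < j) :
    OmegaMat A i j
      = - ∑ p : Fin m, if p < j then OmegaMat A i p * hcoef A p j else 0 := by
  classical
  have hij' : (i : ℕ) < (j : ℕ) := hij
  obtain ⟨k, hk⟩ : ∃ k, (j : ℕ) - (i : ℕ) = k + 1 := ⟨(j : ℕ) - (i : ℕ) - 1, by omega⟩
  rw [omega_eq A hij, hk, Finset.sum_range_succ']
  beta_reduce
  have hterm : ∀ w, (-1 : ℝ) ^ (w + 1 + 1) * chainSum A (w + 1) i j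
      = - ∑ p : Fin m, if p < j then ((-1 : ℝ) ^ (w + 1) * chainSum A w i p) * hcoef A p j
          else 0 := by
    intro w
    rw [chainSum_succ, Finset.mul_sum, ← Finset.sum_neg_distrib]
    refine Finset.sum_congr rfl fun p _ => ?_
    by_cases hpj : p < j
    · rw [if_pos hpj, if_pos hpj]; ring
    · rw [if_neg hpj, if_neg hpj]; ring
  rw [Finset.sum_congr rfl fun w _ => hterm w]
  rw [Finset.sum_neg_distrib, Finset.sum_comm]
  have hmain : ∀ p : Fin m,
      (∑ w ∈ Finset.range k, if p < j then ((-1 : ℝ) ^ (w + 1) * chainSum A w i p) * hcoef A p j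
        else 0)
      = (if p < j then OmegaMat A i p * hcoef A p j else 0)
        - (if p = i then hcoef A i j else 0) := by
    intro p
    by_cases hpj : p < j
    · simp only [if_pos hpj]
      rcases lt_trichotomy p i with hpi | hpi | hpi
      · rw [omega_lower A hpi, if_neg (by rintro rfl; exact lt_irrefl _ hpi)]
        rw [Finset.sum_eq_zero, zero_mul, sub_zero]
        intro w _
        rw [chainSum_eq_zero A, mul_zero, zero_mul]
        have : (p : ℕ) < (i : ℕ) := hpi
        omega
      · subst hpi
        rw [omega_diag, if_pos rfl, one_mul, sub_self]
        refine Finset.sum_eq_zero fun w _ => ?_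
        rw [chainSum_eq_zero A (by omega), mul_zero, zero_mul]
      · rw [omega_eq A hpi, if_neg (by rintro rfl; exact lt_irrefl _ hpi)]
        rw [sub_zero, Finset.sum_mul]
        have hsub : Finset.range ((p : ℕ) - (i : ℕ)) ⊆ Finset.range k := by
          apply Finset.range_subset_range.mpr
          have h1 : (p : ℕ) < (j : ℕ) := hpj
          have h2 : (i : ℕ) < (p : ℕ) := hpi
          omega
        rw [← Finset.sum_subset hsub]
        intro w hw hw'
        rw [chainSum_eq_zero A, mul_zero, zero_mul]
        simp only [Finset.mem_range] at hw hw'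
        have h2 : (i : ℕ) < (p : ℕ) := hpi
        omega
    · rw [if_neg hpj, if_neg (by rintro rfl; exact absurd hij hpj)]
      rw [Finset.sum_eq_zero fun w _ => if_neg hpj, zero_sub, neg_zero]
  rw [Finset.sum_congr rfl fun p _ => hmain p, Finset.sum_sub_distrib]
  rw [Finset.sum_ite_eq' Finset.univ i (fun _ => hcoef A i j), if_pos (Finset.mem_univ i)]
  have hch : chainSum A 0 i j = hcoef A i j := chainSum_zero A hij
  rw [hch]
  ring

lemma proj_mulVec {n : ℕ} (a b : Fin n → ℝ) (ha : a ⬝ᵥ a ≠ 0) :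
    (projMat a).mulVec b = b - ((b ⬝ᵥ a) / (a ⬝ᵥ a)) • a := by
  have hvv : (Matrix.vecMulVec a a).mulVec b = (a ⬝ᵥ b) • a := by
    funext k
    simp only [Matrix.mulVec, dotProduct, Matrix.vecMulVec_apply, Pi.smul_apply, smul_eq_mul]
    rw [Finset.sum_mul]
    exact Finset.sum_congr rfl fun j _ => by ring
  rw [projMat, Matrix.sub_mulVec, Matrix.one_mulVec, Matrix.smul_mulVec, hvv,
    smul_smul, div_eq_inv_mul, dotProduct_comm a b]

lemma key (A : Matrix (Fin m) (Fin n) ℝ) (hA : ∀ i, A i ≠ 0) (i : Fin m) :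
    ∀ len, (i : ℕ) + 1 + len ≤ m →
      (prodDesc (Pnat A) ((i : ℕ) + 1) len).mulVec (A i)
        = ∑ j : Fin m, (if (j : ℕ) ≤ (i : ℕ) + len then OmegaMat A i j else 0) • A j := by
  intro len
  induction len with
  | zero =>
    intro _
    rw [prodDesc, Matrix.one_mulVec, Finset.sum_eq_single i]
    · rw [if_pos (by omega), omega_diag, one_smul]
    · intro j _ hji
      have hji' : (j : ℕ) ≠ (i : ℕ) := fun hh => hji (Fin.ext hh)
      rcases lt_or_ge (i : ℕ) (j : ℕ) with h | h
      · rw [if_neg (by omega), zero_smul]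
      · have hj : j < i := Fin.lt_def.mpr (by omega)
        rw [if_pos (by omega), omega_lower A hj, zero_smul]
    · intro h; exact absurd (Finset.mem_univ _) h
  | succ len ih =>
    intro hlen
    have hq : (i : ℕ) + 1 + len < m := by omega
    set q : Fin m := ⟨(i : ℕ) + 1 + len, hq⟩ with hqdef
    have hP : Pnat A ((i : ℕ) + 1 + len) = projMat (A q) := by
      rw [Pnat, dif_pos hq]
    rw [prodDesc, ← Matrix.mulVec_mulVec, ih (by omega), hP]
    have haq : A q ⬝ᵥ A q ≠ 0 := fun h => hA q (dotProduct_self_eq_zero.mp h)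
    set c : Fin m → ℝ := fun j => if (j : ℕ) ≤ (i : ℕ) + len then OmegaMat A i j else 0
      with hc
    have hqv : (q : ℕ) = (i : ℕ) + 1 + len := rfl
    have hiq : i < q := Fin.lt_def.mpr (by rw [hqv]; omega)
    have hS : OmegaMat A i q = - ∑ j : Fin m, c j * hcoef A j q := by
      rw [omega_rec A hiq]
      congr 1
      refine Finset.sum_congr rfl fun p _ => ?_
      have hiff : p < q ↔ (p : ℕ) ≤ (i : ℕ) + len := by
        rw [Fin.lt_def, hqv]; omega
      simp only [hc]
      by_cases hp : (p : ℕ) ≤ (i : ℕ) + len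
      · rw [if_pos (hiff.mpr hp), if_pos hp]
      · rw [if_neg (fun hh => hp (hiff.mp hh)), if_neg hp, zero_mul]
    have hc' : ∀ j : Fin m, (if (j : ℕ) ≤ (i : ℕ) + (len + 1) then OmegaMat A i j else 0)
        = c j + (if j = q then OmegaMat A i q else 0) := by
      intro j
      simp only [hc]
      by_cases hjq : j = q
      · subst hjq
        rw [if_pos rfl, if_pos (by have := hqv; omega), if_neg (by have := hqv; omega),
          zero_add]
      · have hne : (j : ℕ) ≠ (i : ℕ) + 1 + len := fun hh => hjq (Fin.ext (by rw [hh, hqv]))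
        rw [if_neg hjq, add_zero]
        by_cases hj : (j : ℕ) ≤ (i : ℕ) + len
        · rw [if_pos hj, if_pos (by omega)]
        · rw [if_neg hj, if_neg (by omega)]
    calc (projMat (A q)).mulVec (∑ j : Fin m, c j • A j)
        = ∑ j : Fin m, c j • ((projMat (A q)).mulVec (A j)) := by
          rw [← Matrix.mulVecLin_apply, map_sum]
          exact Finset.sum_congr rfl fun j _ =>
            (projMat (A q)).mulVecLin.map_smul (c j) (A j)
      _ = ∑ j : Fin m, (c j • A j - (c j * hcoef A j q) • A q) := by
          refine Finset.sum_congr rfl fun j _ => ?_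
          rw [proj_mulVec _ _ haq, smul_sub, smul_smul]
          rfl
      _ = (∑ j : Fin m, c j • A j) - (∑ j : Fin m, c j * hcoef A j q) • A q := by
          rw [Finset.sum_sub_distrib, Finset.sum_smul]
      _ = (∑ j : Fin m, c j • A j) + OmegaMat A i q • A q := by
          rw [sub_eq_add_neg, ← neg_smul, ← hS]
      _ = ∑ j : Fin m, (c j • A j + (if j = q then OmegaMat A i q • A j else 0)) := by
          rw [Finset.sum_add_distrib]
          congr 1
          rw [Finset.sum_ite_eq' Finset.univ q (fun j => OmegaMat A i q • A j),
            if_pos (Finset.mem_univ q)]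
      _ = ∑ j : Fin m, (if (j : ℕ) ≤ (i : ℕ) + (len + 1) then OmegaMat A i j else 0) • A j := by
          refine Finset.sum_congr rfl fun j _ => ?_
          rw [hc' j, add_smul]
          congr 1
          by_cases hjq : j = q
          · rw [if_pos hjq, if_pos hjq]
          · rw [if_neg hjq, if_neg hjq, zero_smul]


end Aux

/-- the explicit chain-sum matrix `Ω` satisfies `A_S = Ω A`. -/
theorem stmt10 {m n : ℕ} (A : Matrix (Fin m) (Fin n) ℝ) (hA : ∀ i, A i ≠ 0) :
    ASmat A = OmegaMat A * A := by
  funext i k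
  have him := i.isLt
  have h1 : (i : ℕ) + 1 + (m - 1 - (i : ℕ)) ≤ m := by omega
  have hk := key A hA i (m - 1 - (i : ℕ)) h1
  have hall : ∀ j : Fin m, (j : ℕ) ≤ (i : ℕ) + (m - 1 - (i : ℕ)) := fun j => by
    have := j.isLt; omega
  rw [Matrix.mul_apply]
  calc ASmat A i k
      = (∑ j : Fin m, (if (j : ℕ) ≤ (i : ℕ) + (m - 1 - (i : ℕ)) then OmegaMat A i j else 0)
          • A j) k := congrFun hk k
    _ = ∑ j : Fin m, (if (j : ℕ) ≤ (i : ℕ) + (m - 1 - (i : ℕ)) then OmegaMat A i j else 0)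
          * A j k := by
        rw [Finset.sum_apply]
        exact Finset.sum_congr rfl fun j _ => rfl
    _ = ∑ j : Fin m, OmegaMat A i j * A j k :=
        Finset.sum_congr rfl fun j _ => by rw [if_pos (hall j)]
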